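/- Assume 0 < ε ≤ 1/2 and C > 0, and set M = 1 + (4(2 + ε)/ε²)(C + log 8). Let R_1, …, R_d be independent random variables, each distributed according to the geometric distribution Geom(1/2) on the nonnegative integers, and define S_i = |{j ∈ {1,…,d} : R_j ≥ i}|. Let ℓ ≥ 0 be an integer such that M·2^{ℓ−1} ≤ d < M·2^{ℓ}. Then P(S_{ℓ+1} > M) < (1/8)·e^{−C}. -/

import Mathlib

open MeasureTheory ProbabilityTheory

/-- `Scnt R i` is the number of indices `j` with `R j ≥ i` (an integer index
`i ≤ 0` is satisfied by every entry). -/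
def Scnt {d : ℕ} (R : Fin d → ℕ) (i : ℤ) : ℕ :=
  (Finset.univ.filter fun j : Fin d => i ≤ (R j : ℤ)).card

/-- `Tcnt R i` is the number of indices `j` other than the first one with
`R j ≥ i`. -/
def Tcnt {d : ℕ} (R : Fin d → ℕ) (i : ℤ) : ℕ :=
  (Finset.univ.filter fun j : Fin d => i ≤ (R j : ℤ) ∧ 0 < (j : ℕ)).card

lemma geom_sum_pow : ∑' i : ℕ, (2 : ENNReal)⁻¹ ^ (i + 1) = 1 := by
  have h : ∑' i : ℕ, (2 : ENNReal)⁻¹ ^ (i + 1)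
      = (∑' i : ℕ, (2 : ENNReal)⁻¹ ^ i) * 2⁻¹ := by
    rw [← ENNReal.tsum_mul_right]
    congr 1 with i
    rw [pow_succ]
  rw [h, ENNReal.tsum_geometric, ENNReal.one_sub_inv_two, inv_inv,
    ENNReal.mul_inv_cancel two_ne_zero ENNReal.ofNat_ne_top]

lemma geom_tail {Ω : Type*} [MeasureSpace Ω] (X : Ω → ℕ) (hX : Measurable X)
    (hgeom : ∀ i : ℕ, ℙ {ω | X ω = i} = (2 : ENNReal)⁻¹ ^ (i + 1)) (k : ℕ) :
    ℙ {ω | k ≤ X ω} = (2 : ENNReal)⁻¹ ^ k := by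
  have hs : {ω | k ≤ X ω} = ⋃ i : ℕ, {ω | X ω = k + i} := by
    ext ω
    simp only [Set.mem_setOf_eq, Set.mem_iUnion]
    constructor
    · intro h; exact ⟨X ω - k, by omega⟩
    · rintro ⟨i, hi⟩; omega
  have hdisj : Pairwise (Function.onFun Disjoint fun i : ℕ => {ω | X ω = k + i}) := by
    intro i j hij
    refine Set.disjoint_left.mpr fun ω hi hj => ?_
    simp only [Set.mem_setOf_eq] at hi hj
    omega
  have hmeas : ∀ i : ℕ, MeasurableSet {ω | X ω = k + i} := fun i =>
    hX (measurableSet_singleton (k + i))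
  rw [hs, measure_iUnion hdisj hmeas]
  calc ∑' i : ℕ, ℙ {ω | X ω = k + i}
      = ∑' i : ℕ, (2 : ENNReal)⁻¹ ^ k * (2 : ENNReal)⁻¹ ^ (i + 1) := by
        congr 1 with i
        rw [hgeom (k + i), ← pow_add, add_assoc]
    _ = (2 : ENNReal)⁻¹ ^ k * ∑' i : ℕ, (2 : ENNReal)⁻¹ ^ (i + 1) :=
        ENNReal.tsum_mul_left
    _ = (2 : ENNReal)⁻¹ ^ k := by rw [geom_sum_pow, mul_one]

theorem Scount_high_tail_bound {Ω : Type*} [MeasureSpace Ω]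
    [IsProbabilityMeasure (ℙ : Measure Ω)]
    (ε C : ℝ) (hε : 0 < ε) (hε' : ε ≤ 1 / 2) (hC : 0 < C)
    (M : ℝ) (hM : M = 1 + 4 * (2 + ε) / ε ^ 2 * (C + Real.log 8))
    (d : ℕ) (R : Fin d → Ω → ℕ)
    (hmeas : ∀ j, Measurable (R j))
    (hindep : iIndepFun R ℙ)
    (hgeom : ∀ j (i : ℕ), ℙ {ω | R j ω = i} = (2 : ENNReal)⁻¹ ^ (i + 1))
    (ℓ : ℤ) (hℓ : 0 ≤ ℓ)
    (hℓ₁ : M * 2 ^ (ℓ - 1) ≤ (d : ℝ)) (hℓ₂ : (d : ℝ) < M * 2 ^ ℓ)  :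
    ℙ {ω | M < (Scnt (fun j => R j ω) (ℓ + 1) : ℝ)} <
      ENNReal.ofReal (1 / 8 * Real.exp (-C)) := by
  classical
  -- basic facts about M
  have hlog8 : (0 : ℝ) < Real.log 8 := Real.log_pos (by norm_num)
  have hL : (0 : ℝ) < C + Real.log 8 := by linarith
  have hK : (32 : ℝ) ≤ 4 * (2 + ε) / ε ^ 2 := by
    rw [le_div_iff₀ (by positivity)]
    nlinarith [sq_nonneg ε, hε.le]
  have hMge : 1 + 32 * (C + Real.log 8) ≤ M := by
    rw [hM]; nlinarith
  have hMpos : (0 : ℝ) < M := by nlinarith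
  -- set up n = ℓ.toNat
  set n : ℕ := ℓ.toNat with hn
  have hℓn : ℓ = (n : ℤ) := (Int.toNat_of_nonneg hℓ).symm
  -- the indicator functions
  set g : ℕ → ℝ := fun x => if n + 1 ≤ x then 1 else 0 with hg
  set X : Fin d → Ω → ℝ := fun j => g ∘ R j with hX
  set S : Ω → ℝ := fun ω => ∑ j, X j ω with hS
  have hXval : ∀ j ω, X j ω = if n + 1 ≤ R j ω then (1 : ℝ) else 0 := fun j ω => rfl
  have hX01 : ∀ j ω, 0 ≤ X j ω ∧ X j ω ≤ 1 := by
    intro j ω; rw [hXval]; split <;> norm_num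
  have hSnonneg : ∀ ω, 0 ≤ S ω := fun ω =>
    Finset.sum_nonneg fun j _ => (hX01 j ω).1
  have hSle : ∀ ω, S ω ≤ d := by
    intro ω
    calc S ω ≤ ∑ _j : Fin d, (1 : ℝ) := Finset.sum_le_sum fun j _ => (hX01 j ω).2
      _ = d := by simp
  -- Scnt equals S
  have hScnt : ∀ ω, (Scnt (fun j => R j ω) (ℓ + 1) : ℝ) = S ω := by
    intro ω
    rw [Scnt, Finset.card_filter]
    push_cast
    refine Finset.sum_congr rfl fun j _ => ?_
    have hiff : ((ℓ + 1 : ℤ) ≤ (R j ω : ℤ)) ↔ n + 1 ≤ R j ω := by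
      rw [hℓn]; omega
    simp [hXval, hiff]
  -- measurability and independence
  have hgmeas : Measurable g := measurable_from_top
  have hXmeas : ∀ j, Measurable (X j) := fun j => hgmeas.comp (hmeas j)
  have hXindep : iIndepFun X ℙ :=
    hindep.comp (fun _ => g) fun _ => hgmeas
  have hSmeas : Measurable S := Finset.measurable_sum _ fun j _ => hXmeas j
  -- the tail probability p
  set p : ℝ := (2 : ℝ)⁻¹ ^ (n + 1) with hp
  have hppos : 0 < p := by positivity
  have hA : ∀ j, MeasurableSet {ω | n + 1 ≤ R j ω} := fun j =>
    hmeas j (measurableSet_Ici (a := n + 1))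
  have hptoReal : ∀ j, (ℙ {ω | n + 1 ≤ R j ω}).toReal = p := by
    intro j
    rw [geom_tail (R j) (hmeas j) (hgeom j) (n + 1)]
    simp [hp]
  set t : ℝ := Real.log 2 with ht
  have htpos : 0 < t := Real.log_pos one_lt_two
  have het : Real.exp t = 2 := Real.exp_log two_pos
  -- mgf of each X j
  have hmgfX : ∀ j, mgf (X j) ℙ t = 1 + (Real.exp t - 1) * p := by
    intro j
    have hind : X j = Set.indicator {ω | n + 1 ≤ R j ω} fun _ => (1 : ℝ) := by
      funext ω
      rw [hXval, Set.indicator_apply]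
      simp [Set.mem_setOf_eq]
    have hXint : Integrable (X j) ℙ := by
      rw [hind]; exact (integrable_const 1).indicator (hA j)
    have hintX : ∫ ω, X j ω ∂ℙ = p := by
      rw [hind, integral_indicator_const _ (hA j), measureReal_def, hptoReal j, smul_eq_mul, mul_one]
    have hfun : (fun ω => Real.exp (t * X j ω))
        = fun ω => 1 + (Real.exp t - 1) * X j ω := by
      funext ω
      rw [hXval]
      split <;> simp
    rw [mgf, hfun, integral_add (integrable_const 1) (hXint.const_mul _),
      integral_const, integral_const_mul, hintX]
    simp
  -- mgf of S
  have hmgfS : mgf S ℙ t = (1 + (Real.exp t - 1) * p) ^ d := by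
    have hSsum : S = ∑ j, X j := by
      funext ω; rw [hS]; simp [Finset.sum_apply]
    rw [hSsum, hXindep.mgf_sum hXmeas Finset.univ]
    simp [hmgfX]
  -- integrability of exp (t * S)
  have hint : Integrable (fun ω => Real.exp (t * S ω)) ℙ := by
    refine Integrable.mono' (integrable_const (Real.exp (t * d)))
      ((hSmeas.const_mul t).exp.aestronglyMeasurable) ?_
    filter_upwards with ω
    rw [Real.norm_eq_abs, abs_of_pos (Real.exp_pos _)]
    exact Real.exp_le_exp.mpr (mul_le_mul_of_nonneg_left (hSle ω) htpos.le)
  -- Chernoff bound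
  have hcher := measure_ge_le_exp_mul_mgf (μ := ℙ) (X := S) (t := t) M htpos.le hint
  -- numeric estimates
  have hdp : (d : ℝ) * p < M / 2 := by
    have h2 : (2 : ℝ) ^ ℓ = 2 ^ n := by rw [hℓn, zpow_natCast]
    rw [h2] at hℓ₂
    have hpn : (2 : ℝ) ^ n * p = 1 / 2 := by
      rw [hp, pow_succ, ← mul_assoc, ← mul_pow]
      norm_num
    nlinarith [hppos, hℓ₂, hpn]
  have hmgf_le : mgf S ℙ t ≤ Real.exp ((d : ℝ) * p) := by
    rw [hmgfS, het]
    calc (1 + (2 - 1) * p) ^ d ≤ Real.exp p ^ d := by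
          apply pow_le_pow_left₀ (by positivity)
          linarith [Real.add_one_le_exp p]
      _ = Real.exp ((d : ℝ) * p) := by
          rw [← Real.exp_nat_mul]
  have hnum : Real.exp (-t * M) * mgf S ℙ t < 1 / 8 * Real.exp (-C) := by
    have h8 : Real.exp (-(C + Real.log 8)) = 1 / 8 * Real.exp (-C) := by
      rw [neg_add, Real.exp_add, Real.exp_neg (Real.log 8),
        Real.exp_log (by norm_num : (0 : ℝ) < 8)]
      ring
    calc Real.exp (-t * M) * mgf S ℙ t
        ≤ Real.exp (-t * M) * Real.exp ((d : ℝ) * p) :=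
          mul_le_mul_of_nonneg_left hmgf_le (Real.exp_pos _).le
      _ = Real.exp (-t * M + (d : ℝ) * p) := (Real.exp_add _ _).symm
      _ < Real.exp (-(C + Real.log 8)) := by
          apply Real.exp_lt_exp.mpr
          have hlog2 : (0.6931471803 : ℝ) < t := Real.log_two_gt_d9
          have h17 : (0 : ℝ) < 32 * t - 17 := by linarith
          have hprod1 : 0 < (C + Real.log 8) * (32 * t - 17) := mul_pos hL h17
          have hprod2 : (t - 1 / 2) * (1 + 32 * (C + Real.log 8)) ≤ (t - 1 / 2) * M :=
            mul_le_mul_of_nonneg_left hMge (by linarith)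
          nlinarith [hdp]
      _ = 1 / 8 * Real.exp (-C) := h8
  -- final assembly
  have hset : {ω | M < (Scnt (fun j => R j ω) (ℓ + 1) : ℝ)} ⊆ {ω | M ≤ S ω} := by
    intro ω hω
    simp only [Set.mem_setOf_eq] at *
    rw [hScnt ω] at hω
    exact hω.le
  calc ℙ {ω | M < (Scnt (fun j => R j ω) (ℓ + 1) : ℝ)}
      ≤ ℙ {ω | M ≤ S ω} := measure_mono hset
    _ = ENNReal.ofReal ((ℙ {ω | M ≤ S ω}).toReal) :=
        (ENNReal.ofReal_toReal (measure_ne_top _ _)).symm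
    _ ≤ ENNReal.ofReal (Real.exp (-t * M) * mgf S ℙ t) := ENNReal.ofReal_le_ofReal hcher
    _ < ENNReal.ofReal (1 / 8 * Real.exp (-C)) :=
        (ENNReal.ofReal_lt_ofReal_iff (by positivity)).mpr hnum
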